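/- Let n, k, r, δ be integers with n ≥ k ≥ 1, 1 ≤ r ≤ k, δ ≥ 2. Suppose (r+δ−1) divides n and n·r ≥ k·(r+δ−1). Then for every prime power q with q ≥ C(n, k−1) (the binomial coefficient n choose k−1), there exists an optimal (r,δ)_a linear code of length n and dimension k over F_q. -/

import Mathlib

set_option linter.unusedSectionVars false
set_option maxHeartbeats 1000000

open Finset Submodule Module

/-- group of a coordinate -/
def gpd (m r δ v : ℕ) : ℕ := if v < m * r then v / r else (v - m * r) / (δ - 1)

/-- the j-th repair group -/
def Bset (n m r δ : ℕ) (j : ℕ) : Finset (Fin n) :=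
  Finset.univ.filter fun i => gpd m r δ i.val = j

/-- the data part of the j-th group -/
def Dset (n m r : ℕ) (j : ℕ) : Finset (Fin n) :=
  Finset.univ.filter fun i => i.val < m * r ∧ i.val / r = j

lemma card_filter_Ico {n : ℕ} {a b : ℕ} (hb : b ≤ n) :
    ((Finset.univ : Finset (Fin n)).filter fun i => a ≤ i.val ∧ i.val < b).card = b - a := by
  rw [← Nat.card_Ico a b]
  apply Finset.card_bij (fun i _ => i.val)
  · intro i hi; simp only [mem_filter] at hi; exact Finset.mem_Ico.mpr hi.2
  · intro i _ j _ h; exact Fin.ext h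
  · intro x hx
    rw [Finset.mem_Ico] at hx
    exact ⟨⟨x, lt_of_lt_of_le hx.2 hb⟩, by simp [hx.1, hx.2], rfl⟩

section params

variable {n m r δ : ℕ} (hr : 1 ≤ r) (hδ : 2 ≤ δ) (hn : n = m * (r + δ - 1))

include hr hδ hn

lemma hmrn : m * r ≤ n := by
  rw [hn]; exact Nat.mul_le_mul_left m (by omega)

lemma nsplit : n = m * r + m * (δ - 1) := by
  rw [hn, ← Nat.mul_add]; congr 1; omega

lemma Dset_eq {j : ℕ} (hj : j < m) :
    Dset n m r j
      = Finset.univ.filter fun i => j * r ≤ i.val ∧ i.val < j * r + r := by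
  ext i
  simp only [Dset, mem_filter, mem_univ, true_and]
  constructor
  · rintro ⟨h1, h2⟩
    have hd := Nat.div_add_mod i.val r
    have hm : i.val % r < r := Nat.mod_lt _ hr
    rw [h2] at hd
    have hc : r * j = j * r := Nat.mul_comm _ _
    omega
  · rintro ⟨h1, h2⟩
    have hlt : i.val < m * r := by
      have : j * r + r = (j+1) * r := by ring
      have : (j+1) * r ≤ m * r := Nat.mul_le_mul_right r hj
      omega
    refine ⟨hlt, Nat.div_eq_of_lt_le h1 (by rw [Nat.add_mul, one_mul]; omega)⟩

lemma Dset_card {j : ℕ} (hj : j < m) : (Dset n m r j).card = r := by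
  rw [Dset_eq hr hδ hn hj, card_filter_Ico (by
    have : j * r + r = (j+1)*r := by ring
    have h2 : (j+1) * r ≤ m * r := Nat.mul_le_mul_right r hj
    have := hmrn hr hδ hn
    omega)]
  omega

lemma gpd_lt (v : ℕ) (hv : v < n) : gpd m r δ v < m := by
  unfold gpd
  split
  · next h => exact (Nat.div_lt_iff_lt_mul hr).mpr h
  · next h =>
    have h2 := nsplit hr hδ hn
    exact (Nat.div_lt_iff_lt_mul (by omega)).mpr (by omega)

lemma Bset_eq {j : ℕ} :
    Bset n m r δ j = Dset n m r j ∪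
      (Finset.univ.filter fun i : Fin n =>
        m * r + j * (δ - 1) ≤ i.val ∧ i.val < m * r + j * (δ - 1) + (δ - 1)) := by
  ext i
  simp only [Bset, Dset, mem_union, mem_filter, mem_univ, true_and]
  unfold gpd
  by_cases h : i.val < m * r
  · rw [if_pos h]
    constructor
    · intro hj; exact Or.inl ⟨h, hj⟩
    · rintro (⟨_, hj⟩ | ⟨h1, _⟩); · exact hj
      · omega
  · rw [if_neg h]
    constructor
    · intro hj
      refine Or.inr ?_
      have hd := Nat.div_add_mod (i.val - m * r) (δ - 1)
      have hm : (i.val - m * r) % (δ - 1) < δ - 1 := Nat.mod_lt _ (by omega)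
      rw [hj] at hd
      have hc : (δ - 1) * j = j * (δ - 1) := Nat.mul_comm _ _
      omega
    · rintro (⟨h1, _⟩ | ⟨h1, h2⟩); · omega
      · have : (i.val - m * r) / (δ - 1) = j :=
          Nat.div_eq_of_lt_le (by omega) (by rw [Nat.add_mul, one_mul]; omega)
        exact this

lemma Dset_subset_Bset {j : ℕ} : Dset n m r j ⊆ Bset n m r δ j := by
  rw [Bset_eq hr hδ hn]; exact subset_union_left

lemma Bset_card {j : ℕ} (hj : j < m) : (Bset n m r δ j).card = r + δ - 1 := by
  rw [Bset_eq hr hδ hn]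
  rw [Finset.card_union_of_disjoint]
  · rw [Dset_card hr hδ hn hj, card_filter_Ico (by
      have h2 := nsplit hr hδ hn
      have : (j+1) * (δ-1) ≤ m * (δ-1) := Nat.mul_le_mul_right _ hj
      have : j * (δ - 1) + (δ-1) = (j+1)*(δ-1) := by ring
      omega)]
    omega
  · rw [Finset.disjoint_left]
    intro a ha hb
    simp only [Dset, mem_filter] at ha
    simp only [mem_filter] at hb
    omega

omit hr hδ hn in
lemma mem_Bset_iff {j : ℕ} {i : Fin n} : i ∈ Bset n m r δ j ↔ gpd m r δ i.val = j := by
  simp [Bset]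

omit hr hδ hn in
lemma inter_Bset_eq_filter (Z : Finset (Fin n)) (j : ℕ) :
    Z ∩ Bset n m r δ j = Z.filter fun i => gpd m r δ i.val = j := by
  ext i; simp [Bset, Finset.mem_filter, Finset.mem_inter, and_comm]

lemma sum_inter_Bset (Z : Finset (Fin n)) :
    ∑ j ∈ Finset.range m, (Z ∩ Bset n m r δ j).card = Z.card := by
  rw [Finset.card_eq_sum_card_fiberwise (f := fun i => gpd m r δ i.val) (t := Finset.range m)
    (fun i _ => Finset.mem_range.mpr (gpd_lt hr hδ hn i.val i.isLt))]
  exact Finset.sum_congr rfl fun j _ => by rw [inter_Bset_eq_filter]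


lemma Bset_disjoint {j j' : ℕ} (hjj : j ≠ j') : Disjoint (Bset n m r δ j) (Bset n m r δ j') := by
  rw [Finset.disjoint_left]
  intro a ha hb
  rw [mem_Bset_iff] at ha hb
  exact hjj (ha ▸ hb)

end params

/-- trimming a family of naturals to achieve a given sum -/
lemma aux_trim {α : Type} [DecidableEq α] (s : Finset α) (f : α → ℕ) :
    ∀ T : ℕ, T ≤ ∑ a ∈ s, f a → ∃ u : α → ℕ, (∀ a, u a ≤ f a) ∧ ∑ a ∈ s, u a = T := by
  classical
  induction s using Finset.induction_on with
  | empty => intro T hT; simp at hT; exact ⟨fun _ => 0, fun _ => Nat.zero_le _, by simp [hT]⟩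
  | insert a s' ha ih =>
    intro T hT
    rw [Finset.sum_insert ha] at hT
    obtain ⟨u, hu, hsum⟩ := ih (T - min T (f a)) (by omega)
    refine ⟨Function.update u a (min T (f a)), ?_, ?_⟩
    · intro b
      by_cases hb : b = a
      · subst hb; rw [Function.update_self]; omega
      · rw [Function.update_of_ne hb]; exact hu b
    · have hs2 : ∑ x ∈ s', Function.update u a (min T (f a)) x = ∑ x ∈ s', u x :=
        Finset.sum_congr rfl fun b hb => Function.update_of_ne (fun h : b = a => ha (h ▸ hb)) _ _
      rw [Finset.sum_insert ha, Function.update_self, hs2, hsum]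
      omega

set_option maxHeartbeats 1000000


section avoidance

variable {K V : Type} [Field K] [AddCommGroup V] [Module K V] [FiniteDimensional K V]

lemma rank_span_insert {w : V} {s : Set V} (hw : w ∉ span K s) :
    finrank K (span K (insert w s)) = finrank K (span K s) + 1 := by
  rw [Submodule.span_insert]
  have hw0 : w ≠ 0 := fun h => hw (h ▸ (span K s).zero_mem)
  have hinf : (K ∙ w) ⊓ span K s = ⊥ := by
    rw [eq_bot_iff]
    rintro x hx
    rw [Submodule.mem_inf] at hx
    obtain ⟨c, rfl⟩ := Submodule.mem_span_singleton.mp hx.1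
    rcases eq_or_ne c 0 with rfl | hc
    · simp
    · exfalso
      apply hw
      have : (c⁻¹ : K) • (c • w) ∈ span K s := Submodule.smul_mem _ _ hx.2
      rwa [smul_smul, inv_mul_cancel₀ hc, one_smul] at this
  have h := Submodule.finrank_sup_add_finrank_inf_eq (K ∙ w) (span K s)
  rw [hinf, finrank_bot, finrank_span_singleton hw0] at h
  omega

lemma avoid_subspaces [Fintype K] [Fintype V] {ι : Type} (T : Finset ι)
    (Vs : Submodule K V) (W : ι → Submodule K V)
    (hW : ∀ a ∈ T, ¬ Vs ≤ W a) (hq : T.card ≤ Fintype.card K) :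
    ∃ w ∈ Vs, ∀ a ∈ T, w ∉ W a := by
  classical
  rcases T.eq_empty_or_nonempty with rfl | ⟨a0, ha0⟩
  · exact ⟨0, Vs.zero_mem, by simp⟩
  by_contra hcon
  push_neg at hcon
  set q := Fintype.card K with hqdef
  have hq2 : 2 ≤ q := Fintype.one_lt_card
  have hV0 : Vs ≠ ⊥ := fun h => hW a0 ha0 (h ▸ bot_le)
  set ρ := finrank K Vs with hρdef
  have hρ : 1 ≤ ρ := by
    by_contra h
    exact hV0 ((Submodule.finrank_eq_zero (R := K)).mp (by omega))
  obtain ⟨ρ', hρ'⟩ : ∃ ρ', ρ = ρ' + 1 := ⟨ρ - 1, by omega⟩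
  set P := q ^ ρ' with hPdef
  have hP1 : 1 ≤ P := Nat.one_le_pow _ _ (by omega)
  have hVF : (Finset.univ.filter (· ∈ Vs)).card = q * P := by
    have h1 : Fintype.card {x : V // x ∈ Vs} = (Finset.univ.filter (· ∈ Vs)).card :=
      Fintype.card_subtype _
    have h2 : Fintype.card {x : V // x ∈ Vs} = q ^ (ρ' + 1) := by
      have := card_eq_pow_finrank (K := K) (V := ↥Vs)
      rw [← hρdef, hρ'] at this
      exact this
    rw [← h1, h2, pow_succ, Nat.mul_comm]
  set WF : ι → Finset V := fun a => (Finset.univ.filter (· ∈ W a ⊓ Vs)) \ {0}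
    with hWFdef
  have hsub : (Finset.univ.filter (· ∈ Vs)) ⊆ insert 0 (T.biUnion WF) := by
    intro w hw
    rw [Finset.mem_filter] at hw
    replace hw := hw.2
    rcases eq_or_ne w 0 with rfl | hw0
    · exact Finset.mem_insert_self _ _
    · obtain ⟨a, ha, hwa⟩ := hcon w hw
      refine Finset.mem_insert_of_mem (Finset.mem_biUnion.mpr ⟨a, ha, ?_⟩)
      rw [hWFdef]
      simp only [Finset.mem_sdiff, Finset.mem_filter, Finset.mem_univ, true_and,
        Finset.mem_singleton]
      exact ⟨Submodule.mem_inf.mpr ⟨hwa, hw⟩, hw0⟩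
  have hWFcard : ∀ a ∈ T, (WF a).card ≤ P - 1 := by
    intro a ha
    have hlt : (W a ⊓ Vs : Submodule K V) < Vs := by
      refine lt_of_le_of_ne inf_le_right (fun h => hW a ha ?_)
      exact (le_of_eq h.symm).trans inf_le_left
    have hdlt : finrank K ↥(W a ⊓ Vs) < ρ := Submodule.finrank_lt_finrank_of_lt hlt
    have hc : (Finset.univ.filter (· ∈ W a ⊓ Vs)).card = q ^ finrank K ↥(W a ⊓ Vs) := by
      rw [← Fintype.card_subtype]
      exact card_eq_pow_finrank (K := K)
    have hle : q ^ finrank K ↥(W a ⊓ Vs) ≤ P := by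
      rw [hPdef]
      exact Nat.pow_le_pow_right (by omega) (by omega)
    have h0mem : (0 : V) ∈ Finset.univ.filter (· ∈ W a ⊓ Vs) := by
      rw [Finset.mem_filter]; exact ⟨Finset.mem_univ _, Submodule.zero_mem _⟩
    have hgoal : ((Finset.univ.filter (· ∈ W a ⊓ Vs)) \ {0}).card ≤ P - 1 := by
      have h2 := Finset.card_sdiff_of_subset (Finset.singleton_subset_iff.mpr h0mem)
      simp only [Finset.card_singleton] at h2
      rw [h2, hc]
      omega
    simpa [hWFdef] using hgoal
  have hcard : q * P ≤ 1 + q * (P - 1) := by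
    calc q * P = (Finset.univ.filter (· ∈ Vs)).card := hVF.symm
    _ ≤ (insert 0 (T.biUnion WF)).card := Finset.card_le_card hsub
    _ ≤ 1 + (T.biUnion WF).card := by
        have := Finset.card_insert_le (0 : V) (T.biUnion WF); omega
    _ ≤ 1 + ∑ a ∈ T, (WF a).card := by
        have := Finset.card_biUnion_le (s := T) (t := WF); omega
    _ ≤ 1 + ∑ _a ∈ T, (P - 1) := by
        have := Finset.sum_le_sum hWFcard; omega
    _ = 1 + T.card * (P - 1) := by rw [Finset.sum_const, smul_eq_mul]
    _ ≤ 1 + q * (P - 1) := by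
        have := Nat.mul_le_mul_right (P - 1) hq; omega
  have hq1 : q * (P - 1) + q = q * P := by
    rw [← Nat.mul_add_one, Nat.sub_add_cancel hP1]
  omega

end avoidance

def FtS (n t : ℕ) : Finset (Fin n) := Finset.univ.filter fun i => i.val < t

lemma FtS_card {n t : ℕ} (h : t ≤ n) : (FtS n t).card = t := by
  have : (FtS n t) = Finset.univ.filter fun i : Fin n => 0 ≤ i.val ∧ i.val < t := by
    ext i; simp [FtS]
  rw [this, card_filter_Ico h]; omega

lemma FtS_univ {n : ℕ} : FtS n n = Finset.univ := by
  ext i; simp [FtS, i.isLt]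

lemma mem_FtS {n t : ℕ} {i : Fin n} : i ∈ FtS n t ↔ i.val < t := by simp [FtS]

lemma gpd_data {m r δ v : ℕ} (h : v < m * r) : gpd m r δ v = v / r := if_pos h

lemma mem_Dset {n m r : ℕ} {j : ℕ} {i : Fin n} :
    i ∈ Dset n m r j ↔ i.val < m * r ∧ i.val / r = j := by simp [Dset]

lemma mem_Bset_iff' {n m r δ : ℕ} {j : ℕ} {i : Fin n} :
    i ∈ Bset n m r δ j ↔ gpd m r δ i.val = j := by simp [Bset]

lemma gpd_of_mem_Dset {n m r δ : ℕ} {j : ℕ} {i : Fin n} (h : i ∈ Dset n m r j) :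
    gpd m r δ i.val = j := by
  rw [mem_Dset] at h; rw [gpd_data h.1]; exact h.2

/-- extension lemma keeping the caps -/
lemma cappedExtend {n m r δ k t jj : ℕ} (hr : 1 ≤ r) (hδ : 2 ≤ δ)
    (hn : n = m * (r + δ - 1)) (hk1 : 1 ≤ k) (hkmr : k ≤ m * r)
    (hDcard : ∀ j < m, (Dset n m r j).card = r)
    (hmrt : m * r ≤ t) (hjj : jj < m) :
    ∀ d (S : Finset (Fin n)), S ⊆ FtS n t → (∀ j, (S ∩ Bset n m r δ j).card ≤ r) →
      (S ∩ Bset n m r δ jj).card ≤ r - 1 → S.card + d = k - 1 →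
      ∃ S' : Finset (Fin n), S ⊆ S' ∧ S' ⊆ FtS n t ∧
        (∀ j, (S' ∩ Bset n m r δ j).card ≤ r) ∧
        (S' ∩ Bset n m r δ jj).card ≤ r - 1 ∧ S'.card = k - 1 := by
  intro d
  induction d with
  | zero =>
    intro S h1 h2 h3 h4
    exact ⟨S, Finset.Subset.refl S, h1, h2, h3, by omega⟩
  | succ d ih =>
    intro S h1 h2 h3 h4
    -- find a group with slack
    have hslack : ∃ j < m, (S ∩ Bset n m r δ j).card < (if j = jj then r - 1 else r) := by
      by_contra hcon
      push_neg at hcon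
      have hsum : ∑ j ∈ Finset.range m, (if j = jj then r - 1 else r)
          ≤ ∑ j ∈ Finset.range m, (S ∩ Bset n m r δ j).card := by
        refine Finset.sum_le_sum fun j hj => hcon j (Finset.mem_range.mp hj)
      have hfib : ∑ j ∈ Finset.range m, (S ∩ Bset n m r δ j).card = S.card :=
        sum_inter_Bset hr hδ hn S
      have hconst : ∑ j ∈ Finset.range m, (if j = jj then r - 1 else r) = m * r - 1 := by
        have h5 := Finset.sum_erase_add (Finset.range m)
          (fun j => if j = jj then r - 1 else r) (Finset.mem_range.mpr hjj)
        have h6 : ∑ x ∈ (Finset.range m).erase jj, (if x = jj then r - 1 else r)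
            = (m - 1) * r := by
          rw [Finset.sum_congr rfl (fun x hx => if_neg (Finset.ne_of_mem_erase hx))]
          rw [Finset.sum_const, Finset.card_erase_of_mem (Finset.mem_range.mpr hjj),
            Finset.card_range, smul_eq_mul]
        have h8 : (fun j => if j = jj then r - 1 else r) jj = r - 1 := by simp
        rw [← h5, h6, if_pos rfl]
        have h7 : (m - 1) * r + r = m * r := by
          have := Nat.succ_pred_eq_of_pos (show 0 < m by by_contra h; omega)
          calc (m-1)*r + r = ((m-1)+1)*r := by ring
          _ = m * r := by rw [Nat.sub_add_cancel (by omega)]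
        omega
      rw [hfib, hconst] at hsum
      omega
    obtain ⟨j, hjm, hslackj⟩ := hslack
    -- pick a fresh data element of group j
    have hfresh : ∃ i ∈ Dset n m r j, i ∉ S := by
      by_contra hcon
      push_neg at hcon
      have hsub : Dset n m r j ⊆ S ∩ Bset n m r δ j := by
        intro i hi
        refine Finset.mem_inter.mpr ⟨hcon i hi, ?_⟩
        rw [mem_Bset_iff']
        exact gpd_of_mem_Dset hi
      have := Finset.card_le_card hsub
      rw [hDcard j hjm] at this
      split_ifs at hslackj <;> omega
    obtain ⟨i, hiD, hiS⟩ := hfresh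
    have hiB : gpd m r δ i.val = j := gpd_of_mem_Dset hiD
    have hiFt : i ∈ FtS n t := by
      rw [mem_FtS]
      rw [mem_Dset] at hiD
      omega
    have hinter : ∀ j', (insert i S) ∩ Bset n m r δ j' =
        if j' = j then insert i (S ∩ Bset n m r δ j') else S ∩ Bset n m r δ j' := by
      intro j'
      split_ifs with h
      · subst h
        rw [Finset.insert_inter_of_mem (mem_Bset_iff'.mpr hiB)]
      · rw [Finset.insert_inter_of_notMem]
        intro hmem
        rw [mem_Bset_iff'] at hmem
        exact h (hmem ▸ hiB ▸ rfl)
    have hcard : ∀ j', ((insert i S) ∩ Bset n m r δ j').card ≤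
        (if j' = j then (S ∩ Bset n m r δ j').card + 1 else (S ∩ Bset n m r δ j').card) := by
      intro j'
      rw [hinter j']
      split_ifs
      · exact Finset.card_insert_le _ _
      · exact le_refl _
    have hins1 : ∀ j', ((insert i S) ∩ Bset n m r δ j').card ≤ r := by
      intro j'
      have := hcard j'
      have h2' := h2 j'
      split_ifs at this with h
      · subst h
        split_ifs at hslackj <;> omega
      · omega
    have hins2 : ((insert i S) ∩ Bset n m r δ jj).card ≤ r - 1 := by
      have := hcard jj
      split_ifs at this with h
      · subst h
        rw [if_pos rfl] at hslackj
        omega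
      · omega
    have hins3 : (insert i S).card + d = k - 1 := by
      rw [Finset.card_insert_of_notMem hiS]
      omega
    obtain ⟨S', hS1, hS2, hS3, hS4, hS5⟩ :=
      ih (insert i S) (Finset.insert_subset hiFt h1) hins1 hins2 hins3
    exact ⟨S', (Finset.subset_insert i S).trans hS1, hS2, hS3, hS4, hS5⟩

section greedy

variable {F : Type} [Field F] [Fintype F] [DecidableEq F]
variable {n m r δ k : ℕ}

lemma image_update_eq {α β : Type} [DecidableEq α] [DecidableEq β]
    (c : α → β) (it : α) (w : β) (S : Finset α) (h : it ∉ S) :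
    S.image (Function.update c it w) = S.image c :=
  Finset.image_congr fun i hi => Function.update_of_ne
    (fun (he : i = it) => h (he ▸ (Finset.mem_coe.mp hi))) _ _

lemma span_image_mono (c : Fin n → (Fin k → F)) {S T : Finset (Fin n)} (h : S ⊆ T) :
    span F ((S.image c : Finset (Fin k → F)) : Set (Fin k → F))
      ≤ span F ((T.image c : Finset (Fin k → F)) : Set (Fin k → F)) :=
  Submodule.span_mono (Finset.coe_subset.mpr (Finset.image_subset_image h))

lemma not_top_le_span_of_card_lt (c : Fin n → (Fin k → F)) {S : Finset (Fin n)}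
    (h : S.card < k) :
    ¬((⊤ : Submodule F (Fin k → F)) ≤ span F ((S.image c : Finset (Fin k → F)) : Set (Fin k → F))) := by
  intro hle
  have h1 : finrank F (Fin k → F) = k := Module.finrank_fin_fun F
  have h2 : finrank F ↥(span F ((S.image c : Finset (Fin k → F)) : Set (Fin k → F)))
      ≤ (S.image c).card := finrank_span_finset_le_card _
  have h3 := Submodule.finrank_mono hle
  rw [finrank_top] at h3
  have h4 := Finset.card_image_le (f := c) (s := S)
  omega

/-- the local data span is never inside the span of a capped small set -/
lemma properness (hr : 1 ≤ r) (hδ : 2 ≤ δ) (hn : n = m * (r + δ - 1))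
    (hk1 : 1 ≤ k) (hrk : r ≤ k) {t jj : ℕ}
    (hDcard : ∀ j < m, (Dset n m r j).card = r)
    (hmrt : m * r ≤ t) (hjj : jj < m)
    (c : Fin n → (Fin k → F))
    (hI1 : ∀ S : Finset (Fin n), S ⊆ FtS n t → (∀ j, (S ∩ Bset n m r δ j).card ≤ r) →
      S.card ≤ k →
      finrank F (span F ((S.image c : Finset (Fin k → F)) : Set (Fin k → F))) = S.card)
    (S : Finset (Fin n)) (hS1 : S ⊆ FtS n t)
    (hS2 : ∀ j, (S ∩ Bset n m r δ j).card ≤ r)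
    (hS3 : (S ∩ Bset n m r δ jj).card ≤ r - 1) (hS4 : S.card = k - 1) :
    ¬ (span F (((Dset n m r jj).image c : Finset (Fin k → F)) : Set (Fin k → F))
        ≤ span F ((S.image c : Finset (Fin k → F)) : Set (Fin k → F))) := by
  intro hcon
  have hsd : k - r ≤ (S \ Bset n m r δ jj).card := by
    have h := Finset.card_sdiff_add_card_inter S (Bset n m r δ jj)
    omega
  obtain ⟨W, hWsub, hWcard⟩ := Finset.exists_subset_card_eq hsd
  have hDB : Dset n m r jj ⊆ Bset n m r δ jj := Dset_subset_Bset hr hδ hn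
  have hdisj : Disjoint (Dset n m r jj) W := by
    rw [Finset.disjoint_left]
    intro a haD haW
    exact (Finset.mem_sdiff.mp (hWsub haW)).2 (hDB haD)
  set U := Dset n m r jj ∪ W with hUdef
  have hUcard : U.card = k := by
    rw [hUdef, Finset.card_union_of_disjoint hdisj, hDcard jj hjj, hWcard]
    omega
  have hUsub : U ⊆ FtS n t := by
    rw [hUdef]
    apply Finset.union_subset
    · intro i hi
      rw [mem_Dset] at hi
      rw [mem_FtS]
      omega
    · exact fun i hi => hS1 (Finset.mem_sdiff.mp (hWsub hi)).1
  have hUcaps : ∀ j, (U ∩ Bset n m r δ j).card ≤ r := by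
    intro j
    rw [hUdef, Finset.union_inter_distrib_right]
    by_cases hj : j = jj
    · subst hj
      have hWB : W ∩ Bset n m r δ j = ∅ := by
        rw [Finset.eq_empty_iff_forall_notMem]
        intro a ha
        rw [Finset.mem_inter] at ha
        exact (Finset.mem_sdiff.mp (hWsub ha.1)).2 ha.2
      rw [hWB, Finset.union_empty]
      calc (Dset n m r j ∩ Bset n m r δ j).card ≤ (Dset n m r j).card :=
            Finset.card_le_card Finset.inter_subset_left
      _ = r := hDcard j hjj
    · have hDBj : Dset n m r jj ∩ Bset n m r δ j = ∅ := by
        rw [Finset.eq_empty_iff_forall_notMem]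
        intro a ha
        rw [Finset.mem_inter] at ha
        have h1 := mem_Bset_iff'.mp (hDB ha.1)
        have h2 := mem_Bset_iff'.mp ha.2
        exact hj (h2 ▸ h1 ▸ rfl)
      rw [hDBj, Finset.empty_union]
      calc (W ∩ Bset n m r δ j).card ≤ (S ∩ Bset n m r δ j).card := by
            apply Finset.card_le_card
            exact Finset.inter_subset_inter (fun a ha => (Finset.mem_sdiff.mp (hWsub ha)).1)
              (Finset.Subset.refl _)
      _ ≤ r := hS2 j
  have hUrank := hI1 U hUsub hUcaps (le_of_eq hUcard)
  have htop : span F ((U.image c : Finset (Fin k → F)) : Set (Fin k → F)) = ⊤ := by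
    apply Submodule.eq_top_of_finrank_eq
    rw [hUrank, hUcard, Module.finrank_fin_fun]
  have hle : span F ((U.image c : Finset (Fin k → F)) : Set (Fin k → F))
      ≤ span F ((S.image c : Finset (Fin k → F)) : Set (Fin k → F)) := by
    rw [hUdef, Finset.image_union, Finset.coe_union, Submodule.span_union]
    exact sup_le hcon (span_image_mono c (fun a ha => (Finset.mem_sdiff.mp (hWsub ha)).1))
  rw [htop] at hle
  exact not_top_le_span_of_card_lt c (by omega) hle

end greedy

section greedy2

variable {F : Type} [Field F] [Fintype F] [DecidableEq F]
variable {n m r δ k : ℕ}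

/-- one-step invariant maintenance for the rank property -/
lemma step_I1 (hk1 : 1 ≤ k) {t : ℕ} (htn : t + 1 ≤ n)
    (c : Fin n → (Fin k → F)) (w : Fin k → F) (it : Fin n) (hitval : it.val = t)
    (hI1old : ∀ S : Finset (Fin n), S ⊆ FtS n t → (∀ j, (S ∩ Bset n m r δ j).card ≤ r) →
      S.card ≤ k →
      finrank F (span F ((S.image c : Finset (Fin k → F)) : Set (Fin k → F))) = S.card)
    (havoid : ∀ S₀ : Finset (Fin n), S₀ ⊆ FtS n t →
      (∀ j, (S₀ ∩ Bset n m r δ j).card ≤ r) →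
      (S₀ ∩ Bset n m r δ (gpd m r δ t)).card ≤ r - 1 → S₀.card ≤ k - 1 →
      w ∉ span F ((S₀.image c : Finset (Fin k → F)) : Set (Fin k → F))) :
    ∀ S : Finset (Fin n), S ⊆ FtS n (t+1) → (∀ j, (S ∩ Bset n m r δ j).card ≤ r) →
      S.card ≤ k →
      finrank F (span F ((S.image (Function.update c it w) : Finset (Fin k → F)) :
        Set (Fin k → F))) = S.card := by
  intro S hSsub hScaps hScard
  have hne : ∀ i ∈ S, i ≠ it → i ∈ FtS n t := by
    intro i hi hne
    have h1 := mem_FtS.mp (hSsub hi)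
    rw [mem_FtS]
    have : i.val ≠ t := fun h => hne (Fin.ext (h.trans hitval.symm))
    omega
  by_cases hitS : it ∈ S
  · set S₀ := S.erase it with hS₀def
    have hS₀sub : S₀ ⊆ FtS n t := fun i hi =>
      hne i (Finset.mem_of_mem_erase hi) (Finset.ne_of_mem_erase hi)
    have hS₀caps : ∀ j, (S₀ ∩ Bset n m r δ j).card ≤ r := fun j =>
      le_trans (Finset.card_le_card (Finset.inter_subset_inter
        (Finset.erase_subset it S) (Finset.Subset.refl _))) (hScaps j)
    have hcard0 : 0 < S.card := Finset.card_pos.mpr ⟨it, hitS⟩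
    have hS₀card : S₀.card = S.card - 1 := Finset.card_erase_of_mem hitS
    have hitB : it ∈ Bset n m r δ (gpd m r δ t) := by
      rw [mem_Bset_iff', hitval]
    have hS₀jj : (S₀ ∩ Bset n m r δ (gpd m r δ t)).card ≤ r - 1 := by
      have heq : S₀ ∩ Bset n m r δ (gpd m r δ t)
          = (S ∩ Bset n m r δ (gpd m r δ t)).erase it := by
        ext a
        simp only [hS₀def, Finset.mem_inter, Finset.mem_erase]
        tauto
      rw [heq, Finset.card_erase_of_mem (Finset.mem_inter.mpr ⟨hitS, hitB⟩)]
      have := hScaps (gpd m r δ t)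
      omega
    have hnot : w ∉ span F ((S₀.image c : Finset (Fin k → F)) : Set (Fin k → F)) :=
      havoid S₀ hS₀sub hS₀caps hS₀jj (by omega)
    have hSins : S = insert it S₀ := (Finset.insert_erase hitS).symm
    have himg : S.image (Function.update c it w)
        = insert w (S₀.image c) := by
      conv_lhs => rw [hSins]
      rw [Finset.image_insert, Function.update_self,
        image_update_eq c it w S₀ (Finset.notMem_erase it S)]
    rw [himg, Finset.coe_insert, rank_span_insert hnot,
      hI1old S₀ hS₀sub hS₀caps (by omega)]
    omega
  · have hSsub' : S ⊆ FtS n t := fun i hi => hne i hi (fun h => hitS (h ▸ hi))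
    rw [image_update_eq c it w S hitS]
    exact hI1old S hSsub' hScaps hScard

/-- existence of good columns -/
lemma exists_cols (hr : 1 ≤ r) (hδ : 2 ≤ δ) (hn : n = m * (r + δ - 1))
    (hk1 : 1 ≤ k) (hrk : r ≤ k) (hkmr : k ≤ m * r)
    (hq : n.choose (k-1) ≤ Fintype.card F) :
    ∃ c : Fin n → (Fin k → F),
      (∀ S : Finset (Fin n), (∀ j, (S ∩ Bset n m r δ j).card ≤ r) → S.card ≤ k →
        finrank F (span F ((S.image c : Finset (Fin k → F)) : Set (Fin k → F))) = S.card) ∧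
      (∀ i : Fin n, m * r ≤ i.val →
        c i ∈ span F ((((Dset n m r (gpd m r δ i.val)).image c : Finset (Fin k → F))) :
          Set (Fin k → F))) := by
  classical
  have hDcard : ∀ j < m, (Dset n m r j).card = r := fun j hj => Dset_card hr hδ hn hj
  have hmrn : m * r ≤ n := by
    rw [hn]; exact Nat.mul_le_mul_left m (by omega)
  have hkn : k - 1 ≤ n := by omega
  have H : ∀ t, t ≤ n → ∃ c : Fin n → (Fin k → F),
      (∀ S : Finset (Fin n), S ⊆ FtS n t → (∀ j, (S ∩ Bset n m r δ j).card ≤ r) →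
        S.card ≤ k →
        finrank F (span F ((S.image c : Finset (Fin k → F)) : Set (Fin k → F))) = S.card) ∧
      (∀ i : Fin n, i.val < t → m * r ≤ i.val →
        c i ∈ span F ((((Dset n m r (gpd m r δ i.val)).image c : Finset (Fin k → F))) :
          Set (Fin k → F))) := by
    intro t
    induction t with
    | zero =>
      intro _
      refine ⟨fun _ _ => 0, ?_, by omega⟩
      intro S hSsub _ _
      have hS : S = ∅ := by
        rw [Finset.eq_empty_iff_forall_notMem]
        intro i hi
        have := mem_FtS.mp (hSsub hi)
        omega
      subst hS
      simp
      exact Submodule.finrank_eq_zero.mpr (by simp)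
    | succ t ih =>
      intro ht
      obtain ⟨c, hI1, hI2⟩ := ih (by omega)
      set it : Fin n := ⟨t, by omega⟩ with hitdef
      have hitval : it.val = t := rfl
      have hFtcard : (FtS n t).card = t := FtS_card (by omega)
      by_cases hph : t < m * r
      -- ============ data phase ============
      · set T : Finset (Finset (Fin n)) := (FtS n t).powersetCard (min (k-1) t) with hTdef
        have hW : ∀ S ∈ T, ¬((⊤ : Submodule F (Fin k → F))
            ≤ span F ((S.image c : Finset (Fin k → F)) : Set (Fin k → F))) := by
          intro S hS
          rw [hTdef, Finset.mem_powersetCard] at hS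
          exact not_top_le_span_of_card_lt c (by have := hS.2; omega)
        have hcount : T.card ≤ Fintype.card F := by
          rw [hTdef, Finset.card_powersetCard, hFtcard]
          refine le_trans ?_ hq
          by_cases hkt : k - 1 ≤ t
          · rw [min_eq_left hkt]
            exact Nat.choose_le_choose _ (by omega)
          · rw [min_eq_right (by omega)]
            rw [Nat.choose_self]
            exact Nat.choose_pos hkn
        obtain ⟨w, -, hw⟩ := avoid_subspaces T ⊤
          (fun S => span F ((S.image c : Finset (Fin k → F)) : Set (Fin k → F))) hW hcount
        have havoid : ∀ S₀ : Finset (Fin n), S₀ ⊆ FtS n t →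
            (∀ j, (S₀ ∩ Bset n m r δ j).card ≤ r) →
            (S₀ ∩ Bset n m r δ (gpd m r δ t)).card ≤ r - 1 → S₀.card ≤ k - 1 →
            w ∉ span F ((S₀.image c : Finset (Fin k → F)) : Set (Fin k → F)) := by
          intro S₀ hsub hcaps hjjcap hcard
          have hc1 : S₀.card ≤ min (k-1) t := by
            have := Finset.card_le_card hsub
            omega
          obtain ⟨Shat, hShat1, hShat2, hShat3⟩ := Finset.exists_subsuperset_card_eq hsub hc1
            (by rw [hFtcard]; exact min_le_right _ _)
          have hmem : Shat ∈ T := by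
            rw [hTdef, Finset.mem_powersetCard]
            exact ⟨hShat2, hShat3⟩
          exact fun hmemw => hw Shat hmem (span_image_mono c hShat1 hmemw)
        refine ⟨Function.update c it w,
          step_I1 hk1 ht c w it hitval hI1 havoid, ?_⟩
        intro i hi1 hi2
        omega
      -- ============ parity phase ============
      · set jj := gpd m r δ t with hjjdef
        have hjj : jj < m := gpd_lt hr hδ hn t (by omega)
        set T : Finset (Finset (Fin n)) := ((FtS n t).powersetCard (k-1)).filter
          (fun S => (∀ j, (S ∩ Bset n m r δ j).card ≤ r) ∧
            (S ∩ Bset n m r δ jj).card ≤ r - 1) with hTdef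
        set Vs := span F ((((Dset n m r jj).image c : Finset (Fin k → F))) :
          Set (Fin k → F)) with hVsdef
        have hW : ∀ S ∈ T, ¬(Vs
            ≤ span F ((S.image c : Finset (Fin k → F)) : Set (Fin k → F))) := by
          intro S hS
          rw [hTdef, Finset.mem_filter, Finset.mem_powersetCard] at hS
          exact properness hr hδ hn hk1 hrk hDcard (by omega) hjj c hI1 S
            hS.1.1 hS.2.1 hS.2.2 hS.1.2
        have hcount : T.card ≤ Fintype.card F := by
          refine le_trans (Finset.card_filter_le _ _) ?_
          rw [Finset.card_powersetCard, hFtcard]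
          exact le_trans (Nat.choose_le_choose _ (by omega)) hq
        obtain ⟨w, hwV, hw⟩ := avoid_subspaces T Vs
          (fun S => span F ((S.image c : Finset (Fin k → F)) : Set (Fin k → F))) hW hcount
        have havoid : ∀ S₀ : Finset (Fin n), S₀ ⊆ FtS n t →
            (∀ j, (S₀ ∩ Bset n m r δ j).card ≤ r) →
            (S₀ ∩ Bset n m r δ jj).card ≤ r - 1 → S₀.card ≤ k - 1 →
            w ∉ span F ((S₀.image c : Finset (Fin k → F)) : Set (Fin k → F)) := by
          intro S₀ hsub hcaps hjjcap hcard
          obtain ⟨S', hS'1, hS'2, hS'3, hS'4, hS'5⟩ := cappedExtend hr hδ hn hk1 hkmr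
            hDcard (by omega) hjj (k - 1 - S₀.card) S₀ hsub hcaps hjjcap (by omega)
          have hmem : S' ∈ T := by
            rw [hTdef, Finset.mem_filter, Finset.mem_powersetCard]
            exact ⟨⟨hS'2, hS'5⟩, hS'3, hS'4⟩
          exact fun hmemw => hw S' hmem (span_image_mono c hS'1 hmemw)
        refine ⟨Function.update c it w,
          step_I1 hk1 ht c w it hitval hI1 havoid, ?_⟩
        intro i hi1 hi2
        have hDno : ∀ j', it ∉ Dset n m r j' := by
          intro j' hmem
          rw [mem_Dset] at hmem
          omega
        by_cases hieq : i = it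
        · have hival : i.val = t := by rw [hieq]
          have himg : (Dset n m r (gpd m r δ i.val)).image (Function.update c it w)
              = (Dset n m r jj).image c := by
            rw [hival, ← hjjdef, image_update_eq c it w _ (hDno jj)]
          rw [himg, hieq, Function.update_self]
          exact hwV
        · have hilt : i.val < t := by
            have : i.val ≠ t := fun h => hieq (Fin.ext h)
            omega
          rw [Function.update_of_ne hieq,
            image_update_eq c it w _ (hDno (gpd m r δ i.val))]
          exact hI2 i hilt hi2
  obtain ⟨c, hI1, hI2⟩ := H n (le_refl n)
  refine ⟨c, ?_, ?_⟩
  · intro S hcaps hcard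
    exact hI1 S (by rw [FtS_univ]; exact Finset.subset_univ S) hcaps hcard
  · intro i hi
    exact hI2 i i.isLt hi

end greedy2

section combinatorial

/-- the min-sum lower bound -/
lemma minsum {m s e k r δ g K : ℕ} (hr : 1 ≤ r) (hδ : 2 ≤ δ)
    (hg : g = r + δ - 1) (hk : k = s * r + e) (he1 : 1 ≤ e) (her : e ≤ r)
    (hK : K = s * g + e) (hsm : s < m)
    (z : ℕ → ℕ) (hz : ∀ j ∈ Finset.range m, z j ≤ g)
    (hsum : K ≤ ∑ j ∈ Finset.range m, z j) :
    k ≤ ∑ j ∈ Finset.range m, min (z j) r := by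
  classical
  have hsplit := Finset.sum_filter_add_sum_filter_not (Finset.range m)
    (fun j => r ≤ z j) (fun j => min (z j) r)
  have hzsplit := Finset.sum_filter_add_sum_filter_not (Finset.range m)
    (fun j => r ≤ z j) z
  have hTsum : ∑ j ∈ (Finset.range m).filter (fun j => r ≤ z j), min (z j) r
      = ((Finset.range m).filter (fun j => r ≤ z j)).card * r := by
    rw [Finset.sum_congr rfl (fun j hj => min_eq_right (Finset.mem_filter.mp hj).2),
      Finset.sum_const, smul_eq_mul]
  have hNsum : ∑ j ∈ (Finset.range m).filter (fun j => ¬ r ≤ z j), min (z j) r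
      = ∑ j ∈ (Finset.range m).filter (fun j => ¬ r ≤ z j), z j := by
    refine Finset.sum_congr rfl fun j hj => min_eq_left ?_
    have := (Finset.mem_filter.mp hj).2
    omega
  have hTz : ∑ j ∈ (Finset.range m).filter (fun j => r ≤ z j), z j
      ≤ ((Finset.range m).filter (fun j => r ≤ z j)).card * g := by
    have := Finset.sum_le_card_nsmul ((Finset.range m).filter (fun j => r ≤ z j)) z g
      (fun j hj => hz j (Finset.mem_filter.mp hj).1)
    rwa [smul_eq_mul] at this
  set t := ((Finset.range m).filter (fun j => r ≤ z j)).card with htdef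
  by_cases hts : t ≤ s
  · have h1 : t * g = t * r + t * (δ - 1) := by
      rw [hg]
      have h0 : r + δ - 1 = r + (δ - 1) := by omega
      rw [h0, Nat.mul_add]
    have h2 : t * (δ - 1) ≤ s * (δ - 1) := Nat.mul_le_mul_right _ hts
    have h3 : s * g = s * r + s * (δ - 1) := by
      rw [hg]
      have h0 : r + δ - 1 = r + (δ - 1) := by omega
      rw [h0, Nat.mul_add]
    omega
  · have h1 : (s + 1) * r ≤ t * r := Nat.mul_le_mul_right _ (by omega)
    have h2 : (s + 1) * r = s * r + r := by ring
    omega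

/-- selecting a capped subset of prescribed size from a large set -/
lemma exists_capped_subset {n m r δ k s e K : ℕ} (hr : 1 ≤ r) (hδ : 2 ≤ δ)
    (hn : n = m * (r + δ - 1)) (hk : k = s * r + e) (he1 : 1 ≤ e) (her : e ≤ r)
    (hK : K = s * (r + δ - 1) + e) (hsm : s < m)
    (Z : Finset (Fin n)) (hZ : K ≤ Z.card) :
    ∃ U : Finset (Fin n), U ⊆ Z ∧ (∀ j, (U ∩ Bset n m r δ j).card ≤ r) ∧ U.card = k := by
  classical
  set z : ℕ → ℕ := fun j => (Z ∩ Bset n m r δ j).card with hzdef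
  have hzsum : ∑ j ∈ Finset.range m, z j = Z.card := sum_inter_Bset hr hδ hn Z
  have hzle : ∀ j ∈ Finset.range m, z j ≤ r + δ - 1 := by
    intro j hj
    rw [hzdef]
    calc (Z ∩ Bset n m r δ j).card ≤ (Bset n m r δ j).card :=
          Finset.card_le_card Finset.inter_subset_right
    _ = r + δ - 1 := Bset_card hr hδ hn (Finset.mem_range.mp hj)
  have hmin : k ≤ ∑ j ∈ Finset.range m, min (z j) r :=
    minsum hr hδ rfl hk he1 her hK hsm z hzle (by omega)
  obtain ⟨u, hu1, hu2⟩ := aux_trim (Finset.range m) (fun j => min (z j) r) k hmin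
  have hch : ∀ j : ℕ, ∃ V : Finset (Fin n), V ⊆ Z ∩ Bset n m r δ j ∧
      (j < m → V.card = u j) := by
    intro j
    by_cases hj : j < m
    · obtain ⟨V, hV1, hV2⟩ := Finset.exists_subset_card_eq
        (show u j ≤ (Z ∩ Bset n m r δ j).card from le_trans (hu1 j) (min_le_left _ _))
      exact ⟨V, hV1, fun _ => hV2⟩
    · exact ⟨∅, Finset.empty_subset _, fun h => absurd h hj⟩
  choose V hV1 hV2 using hch
  set U := (Finset.range m).biUnion V with hUdef
  have hVB : ∀ j, V j ⊆ Bset n m r δ j := fun j =>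
    (hV1 j).trans Finset.inter_subset_right
  have hdisj : ∀ j ∈ Finset.range m, ∀ j' ∈ Finset.range m, j ≠ j' →
      Disjoint (V j) (V j') := by
    intro j _ j' _ hjj
    exact Finset.disjoint_of_subset_left (hVB j)
      (Finset.disjoint_of_subset_right (hVB j') (Bset_disjoint hr hδ hn hjj))
  have hUcard : U.card = k := by
    rw [hUdef, Finset.card_biUnion hdisj, ← hu2]
    exact Finset.sum_congr rfl fun j hj => hV2 j (Finset.mem_range.mp hj)
  have hUZ : U ⊆ Z := by
    rw [hUdef]
    refine Finset.biUnion_subset.mpr fun j _ => (hV1 j).trans Finset.inter_subset_left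
  refine ⟨U, hUZ, ?_, hUcard⟩
  intro j
  by_cases hj : j < m
  · have hUB : U ∩ Bset n m r δ j ⊆ V j := by
      intro i hi
      rw [Finset.mem_inter, hUdef, Finset.mem_biUnion] at hi
      obtain ⟨⟨j', hj', hij'⟩, hiB⟩ := hi
      have h1 := mem_Bset_iff'.mp (hVB j' hij')
      have h2 := mem_Bset_iff'.mp hiB
      have : j' = j := by omega
      exact this ▸ hij'
    calc (U ∩ Bset n m r δ j).card ≤ (V j).card := Finset.card_le_card hUB
    _ = u j := hV2 j hj
    _ ≤ r := le_trans (hu1 j) (min_le_right _ _)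
  · have hB : U ∩ Bset n m r δ j = ∅ := by
      rw [Finset.eq_empty_iff_forall_notMem]
      intro i hi
      have := mem_Bset_iff'.mp (Finset.mem_inter.mp hi).2
      have := gpd_lt hr hδ hn i.val i.isLt
      omega
    rw [hB]
    simp

end combinatorial

section dotprod

variable {F : Type} [Field F] [DecidableEq F] {k : ℕ}

/-- dot product with `v`, as a linear map -/
def dotL (v : Fin k → F) : (Fin k → F) →ₗ[F] F where
  toFun x := ∑ l, x l * v l
  map_add' a b := by simp [add_mul, Finset.sum_add_distrib]
  map_smul' t a := by
    simp only [Pi.smul_apply, smul_eq_mul, RingHom.id_apply, Finset.mul_sum]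
    exact Finset.sum_congr rfl fun _ _ => by ring

lemma dotL_comm (v x : Fin k → F) : dotL v x = dotL x v := by
  simp only [dotL, LinearMap.coe_mk, AddHom.coe_mk]
  exact Finset.sum_congr rfl fun _ _ => mul_comm _ _

/-- standard basis vector -/
def bvec (l : Fin k) : Fin k → F := fun j => if l = j then 1 else 0

lemma dotL_bvec (x : Fin k → F) (l : Fin k) : dotL x (bvec l) = x l := by
  simp only [dotL, bvec, LinearMap.coe_mk, AddHom.coe_mk, ite_mul, one_mul, zero_mul]
  rw [Finset.sum_ite_eq]
  simp

lemma eval_span_zero {x : Fin k → F} {s : Set (Fin k → F)}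
    (h : ∀ v ∈ s, dotL x v = 0) : ∀ v ∈ Submodule.span F s, dotL x v = 0 := by
  intro v hv
  have hle : Submodule.span F s ≤ LinearMap.ker (dotL x) :=
    Submodule.span_le.mpr fun w hw => LinearMap.mem_ker.mpr (h w hw)
  exact LinearMap.mem_ker.mp (hle hv)

lemma x_zero_of_all (x : Fin k → F) (h : ∀ v, dotL x v = 0) : x = 0 := by
  funext l
  have := h (bvec l)
  rw [dotL_bvec] at this
  simpa using this

lemma exists_perp (W : Submodule F (Fin k → F)) (hW : W ≠ ⊤) :
    ∃ x : Fin k → F, x ≠ 0 ∧ ∀ v ∈ W, dotL x v = 0 := by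
  obtain ⟨v0, hv0⟩ : ∃ v0, v0 ∉ W := by
    by_contra h
    push_neg at h
    exact hW (eq_top_iff.mpr fun v _ => h v)
  rw [← Subspace.forall_mem_dualAnnihilator_apply_eq_zero_iff W v0] at hv0
  push_neg at hv0
  obtain ⟨φ, hφann, hφv0⟩ := hv0
  have hrep : ∀ v : Fin k → F, φ v = dotL (fun l => φ (bvec l)) v := by
    intro v
    have hv : v = ∑ l, v l • bvec l := pi_eq_sum_univ v
    calc φ v = φ (∑ l, v l • bvec l) := by rw [← hv]
    _ = ∑ l, v l • φ (bvec l) := by rw [map_sum]; exact Finset.sum_congr rfl fun l _ => map_smul φ _ _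
    _ = dotL (fun l => φ (bvec l)) v := by
        simp only [dotL, LinearMap.coe_mk, AddHom.coe_mk, smul_eq_mul]
  refine ⟨fun l => φ (bvec l), ?_, ?_⟩
  · intro hx0
    apply hφv0
    rw [hrep v0, hx0]
    simp [dotL]
  · intro v hv
    rw [← hrep]
    exact (Submodule.mem_dualAnnihilator φ).mp hφann v hv

end dotprod



/-- The Hamming weight of a vector. -/
def hWt {F : Type} [Field F] [DecidableEq F] {ι : Type} [Fintype ι] (c : ι → F) : ℕ :=
  (Finset.univ.filter fun i => c i ≠ 0).card

/-- `d` is the minimum Hamming distance of the linear code `C`. -/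
def IsMinDist {F : Type} [Field F] [DecidableEq F] {ι : Type} [Fintype ι]
    (C : Submodule F (ι → F)) (d : ℕ) : Prop :=
  IsLeast {w : ℕ | ∃ c ∈ C, c ≠ 0 ∧ hWt c = w} d

/-- The punctured code `C|_S` has minimum distance at least `δ`. -/
def PuncturedDistGE {F : Type} [Field F] [DecidableEq F] {n : ℕ}
    (C : Submodule F (Fin n → F)) (S : Finset (Fin n)) (δ : ℕ) : Prop :=
  ∀ c ∈ C, (∃ i ∈ S, c i ≠ 0) → δ ≤ (S.filter fun i => c i ≠ 0).card

/-- `C` has all-symbol `(r,δ)` locality. -/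
def IsLRC {F : Type} [Field F] [DecidableEq F] {n : ℕ}
    (C : Submodule F (Fin n → F)) (r δ : ℕ) : Prop :=
  ∀ i : Fin n, ∃ S : Finset (Fin n), i ∈ S ∧ S.card ≤ r + δ - 1 ∧ PuncturedDistGE C S δ

/-- `C` is an optimal `(r,δ)_a` linear code of length `n` and dimension `k`:
it has dimension `k`, all-symbol `(r,δ)` locality, and its minimum distance equals
`n - k + 1 - (⌈k/r⌉ - 1)(δ - 1)`. -/
def IsOptimalLRC {F : Type} [Field F] [DecidableEq F] {n : ℕ}
    (C : Submodule F (Fin n → F)) (k r δ : ℕ) : Prop :=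
  Module.finrank F ↥C = k ∧ IsLRC C r δ ∧
  ∃ d : ℕ, IsMinDist C d ∧
    (d : ℤ) = (n : ℤ) - (k : ℤ) + 1 - ((((k + r - 1) / r : ℕ) : ℤ) - 1) * ((δ : ℤ) - 1)

/-- Theorem `opt-ext-1`: if `(r+δ-1) ∣ n` and `n·r ≥ k·(r+δ-1)`, then over
every finite field of size at least `C(n, k-1)` there exists an optimal `(r,δ)_a`
linear code of length `n` and dimension `k`. -/
theorem statement12 {n k r δ : ℕ} (hk1 : 1 ≤ k) (hkn : k ≤ n) (hr1 : 1 ≤ r)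
    (hrk : r ≤ k) (hδ : 2 ≤ δ)
    (hdvd : (r + δ - 1) ∣ n) (hnr : k * (r + δ - 1) ≤ n * r) :
    ∀ (F : Type) [Field F] [Fintype F] [DecidableEq F],
      n.choose (k - 1) ≤ Fintype.card F →
      ∃ C : Submodule F (Fin n → F), IsOptimalLRC C k r δ := by
  intro F _ _ _ hq
  classical
  -- ===================== numerics =====================
  obtain ⟨m, hm⟩ := hdvd
  have hn : n = m * (r + δ - 1) := by rw [hm]; ring
  have hkmr : k ≤ m * r := by
    have h1 : k * (r + δ - 1) ≤ (m * r) * (r + δ - 1) := by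
      calc k * (r + δ - 1) ≤ n * r := hnr
      _ = (m * r) * (r + δ - 1) := by rw [hn]; ring
    exact Nat.le_of_mul_le_mul_right h1 (by omega)
  set s := (k - 1) / r with hsdef
  set e := k - s * r with hedef
  have hsr : s * r ≤ k - 1 := Nat.div_mul_le_self _ _
  have hmod : r * s + (k - 1) % r = k - 1 := by
    rw [hsdef]; exact Nat.div_add_mod (k - 1) r
  have hmodlt : (k - 1) % r < r := Nat.mod_lt _ (by omega)
  have hcomm : r * s = s * r := Nat.mul_comm _ _
  have hke : k = s * r + e := by omega
  have he1 : 1 ≤ e := by omega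
  have her : e ≤ r := by omega
  have hsm : s < m := by
    have h2 : k - 1 < m * r := by omega
    exact (Nat.div_lt_iff_lt_mul (by omega)).mpr h2
  set K := k + s * (δ - 1) with hKdef
  have hmulsplit : s * (r + δ - 1) = s * r + s * (δ - 1) := by
    have h0 : r + δ - 1 = r + (δ - 1) := by omega
    rw [h0, Nat.mul_add]
  have hKsg : K = s * (r + δ - 1) + e := by omega
  have hKn : K ≤ n := by
    have h4 : (s + 1) * (r + δ - 1) ≤ m * (r + δ - 1) := Nat.mul_le_mul_right _ (by omega)
    have h5 : (s + 1) * (r + δ - 1) = s * (r + δ - 1) + (r + δ - 1) := by ring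
    omega
  set dstar := n + 1 - K with hdstardef
  have hds : dstar + K = n + 1 := by omega
  -- ===================== the columns =====================
  obtain ⟨c, hI1, hI2⟩ := exists_cols (F := F) (by omega) hδ hn hk1 hrk hkmr hq
  set Φ : (Fin k → F) →ₗ[F] (Fin n → F) := LinearMap.pi (fun i => dotL (c i)) with hΦdef
  have hΦap : ∀ (x : Fin k → F) (i : Fin n), Φ x i = dotL (c i) x := fun x i => rfl
  set C := LinearMap.range Φ with hCdef
  have hDcard : ∀ j < m, (Dset n m r j).card = r := fun j hj => Dset_card (by omega) hδ hn hj
  have hBcard : ∀ j < m, (Bset n m r δ j).card = r + δ - 1 :=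
    fun j hj => Bset_card (by omega) hδ hn hj
  have hspan_col : ∀ i : Fin n,
      c i ∈ span F (((Dset n m r (gpd m r δ i.val)).image c : Finset (Fin k → F)) :
        Set (Fin k → F)) := by
    intro i
    by_cases hmr : m * r ≤ i.val
    · exact hI2 i hmr
    · apply Submodule.subset_span
      refine Finset.mem_coe.mpr (Finset.mem_image_of_mem c ?_)
      rw [mem_Dset]
      exact ⟨by omega, (gpd_data (by omega)).symm⟩
  have hVrank : ∀ j < m,
      finrank F (span F (((Dset n m r j).image c : Finset (Fin k → F)) :
        Set (Fin k → F))) = r := by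
    intro j hj
    have h1 := hI1 (Dset n m r j)
      (fun j' => le_trans (Finset.card_le_card Finset.inter_subset_left)
        (le_of_eq (hDcard j hj)))
      (by rw [hDcard j hj]; exact hrk)
    rw [h1, hDcard j hj]
  -- ===================== injectivity =====================
  have hker : ∀ x : Fin k → F, Φ x = 0 → x = 0 := by
    intro x hx
    obtain ⟨U, hUZ, hUcaps, hUcard⟩ := exists_capped_subset (by omega) hδ hn hke he1 her
      hKsg hsm Finset.univ (by rw [Finset.card_univ, Fintype.card_fin]; exact hKn)
    have hrank := hI1 U hUcaps (le_of_eq hUcard)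
    have htop : span F ((U.image c : Finset (Fin k → F)) : Set (Fin k → F)) = ⊤ :=
      Submodule.eq_top_of_finrank_eq (by rw [hrank, hUcard, Module.finrank_fin_fun])
    apply x_zero_of_all
    intro v
    have hv : v ∈ span F ((U.image c : Finset (Fin k → F)) : Set (Fin k → F)) := by
      rw [htop]; exact Submodule.mem_top
    refine eval_span_zero ?_ v hv
    intro w hw
    obtain ⟨i, hi, rfl⟩ := Finset.mem_image.mp (Finset.mem_coe.mp hw)
    rw [← dotL_comm, ← hΦap x i, hx]
    rfl
  have hinj : Function.Injective Φ := by
    rw [← LinearMap.ker_eq_bot, LinearMap.ker_eq_bot']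
    exact fun x hx => hker x hx
  have hfinrank : finrank F ↥C = k := by
    rw [hCdef, LinearMap.finrank_range_of_inj hinj, Module.finrank_fin_fun]
  -- ===================== min distance lower bound =====================
  have hlow : ∀ x : Fin k → F, Φ x ≠ 0 →
      dstar ≤ (Finset.univ.filter fun i => Φ x i ≠ 0).card := by
    intro x hx0
    by_contra hlt
    push_neg at hlt
    set Z := Finset.univ.filter (fun i : Fin n => ¬ Φ x i ≠ 0) with hZdef
    have hZcard : (Finset.univ.filter fun i => Φ x i ≠ 0).card + Z.card = n := by
      rw [hZdef, Finset.card_filter_add_card_filter_not, Finset.card_univ,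
        Fintype.card_fin]
    have hKZ : K ≤ Z.card := by omega
    obtain ⟨U, hUZ, hUcaps, hUcard⟩ := exists_capped_subset (by omega) hδ hn hke he1 her
      hKsg hsm Z hKZ
    have hrank := hI1 U hUcaps (le_of_eq hUcard)
    have htop : span F ((U.image c : Finset (Fin k → F)) : Set (Fin k → F)) = ⊤ :=
      Submodule.eq_top_of_finrank_eq (by rw [hrank, hUcard, Module.finrank_fin_fun])
    apply hx0
    have hx : x = 0 := by
      apply x_zero_of_all
      intro v
      have hv : v ∈ span F ((U.image c : Finset (Fin k → F)) : Set (Fin k → F)) := by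
        rw [htop]; exact Submodule.mem_top
      refine eval_span_zero ?_ v hv
      intro w hw
      obtain ⟨i, hi, rfl⟩ := Finset.mem_image.mp (Finset.mem_coe.mp hw)
      rw [← dotL_comm, ← hΦap x i]
      have hiZ := hUZ hi
      rw [hZdef, Finset.mem_filter] at hiZ
      exact not_not.mp hiZ.2
    rw [hx, map_zero]
  -- ===================== locality =====================
  have hloc : IsLRC C r δ := by
    intro i
    have hj : gpd m r δ i.val < m := gpd_lt (by omega) hδ hn i.val i.isLt
    refine ⟨Bset n m r δ (gpd m r δ i.val), mem_Bset_iff'.mpr rfl,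
      le_of_eq (hBcard _ hj), ?_⟩
    intro cw hcw hex
    obtain ⟨i₀, hi₀, hne⟩ := hex
    obtain ⟨x, rfl⟩ := LinearMap.mem_range.mp hcw
    by_contra hlt
    push_neg at hlt
    have hsplit := Finset.card_filter_add_card_filter_not
      (s := Bset n m r δ (gpd m r δ i.val)) (p := fun i' => Φ x i' ≠ 0)
    have hZlcard : r ≤ ((Bset n m r δ (gpd m r δ i.val)).filter
        (fun i' => ¬ Φ x i' ≠ 0)).card := by
      have := hBcard _ hj
      omega
    obtain ⟨Z', hZ'sub, hZ'card⟩ := Finset.exists_subset_card_eq hZlcard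
    have hZ'caps : ∀ j', (Z' ∩ Bset n m r δ j').card ≤ r := fun j' =>
      le_trans (Finset.card_le_card Finset.inter_subset_left) (le_of_eq hZ'card)
    have hrank := hI1 Z' hZ'caps (hZ'card ▸ hrk)
    have hle : span F ((Z'.image c : Finset (Fin k → F)) : Set (Fin k → F))
        ≤ span F (((Dset n m r (gpd m r δ i.val)).image c : Finset (Fin k → F)) :
          Set (Fin k → F)) := by
      rw [Submodule.span_le]
      intro w hw
      obtain ⟨i', hi', rfl⟩ := Finset.mem_image.mp (Finset.mem_coe.mp hw)
      have hi'B : i' ∈ Bset n m r δ (gpd m r δ i.val) :=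
        Finset.mem_of_mem_filter i' (hZ'sub hi')
      have hgp := mem_Bset_iff'.mp hi'B
      have h1 := hspan_col i'
      rw [hgp] at h1
      exact h1
    have heq : span F ((Z'.image c : Finset (Fin k → F)) : Set (Fin k → F))
        = span F (((Dset n m r (gpd m r δ i.val)).image c : Finset (Fin k → F)) :
          Set (Fin k → F)) := by
      refine Submodule.eq_of_le_of_finrank_le hle ?_
      rw [hVrank _ hj, hrank, hZ'card]
    have hkill : ∀ v ∈ span F ((Z'.image c : Finset (Fin k → F)) : Set (Fin k → F)),
        dotL x v = 0 := by
      refine eval_span_zero ?_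
      intro w hw
      obtain ⟨i', hi', rfl⟩ := Finset.mem_image.mp (Finset.mem_coe.mp hw)
      rw [← dotL_comm, ← hΦap x i']
      exact not_not.mp (Finset.mem_filter.mp (hZ'sub hi')).2
    have hc0 : dotL x (c i₀) = 0 := by
      have hmem := hspan_col i₀
      rw [mem_Bset_iff'.mp hi₀] at hmem
      rw [← heq] at hmem
      exact hkill _ hmem
    apply hne
    rw [hΦap x i₀, dotL_comm]
    exact hc0
  -- ===================== min-weight codeword =====================
  have hE : e - 1 ≤ (Dset n m r s).card := by rw [hDcard s hsm]; omega
  obtain ⟨E, hEsub, hEcard⟩ := Finset.exists_subset_card_eq hE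
  set R := ((Finset.range s).biUnion (Bset n m r δ)) ∪ E with hRdef
  set D' := ((Finset.range s).biUnion (Dset n m r)) ∪ E with hD'def
  have hD'card : D'.card ≤ k - 1 := by
    refine le_trans (Finset.card_union_le _ _) ?_
    have h1 : ((Finset.range s).biUnion (Dset n m r)).card ≤ s * r := by
      refine le_trans Finset.card_biUnion_le ?_
      refine le_trans (Finset.sum_le_card_nsmul _ _ r fun j hj =>
        le_of_eq (hDcard j (lt_trans (Finset.mem_range.mp hj) hsm))) ?_
      rw [smul_eq_mul, Finset.card_range]
    omega
  set Wp := span F ((D'.image c : Finset (Fin k → F)) : Set (Fin k → F)) with hWpdef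
  have hWne : Wp ≠ ⊤ := by
    intro htop
    have h1 : finrank F ↥Wp ≤ (D'.image c).card := finrank_span_finset_le_card _
    have h2 := Finset.card_image_le (f := c) (s := D')
    rw [htop, finrank_top, Module.finrank_fin_fun] at h1
    omega
  obtain ⟨x, hx0, hxW⟩ := exists_perp Wp hWne
  have hcwR : ∀ i ∈ R, Φ x i = 0 := by
    intro i hiR
    have hciW : c i ∈ Wp := by
      rw [hRdef, Finset.mem_union] at hiR
      rcases hiR with hiB | hiE
      · obtain ⟨j, hj, hiBj⟩ := Finset.mem_biUnion.mp hiB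
        have h1 := hspan_col i
        rw [mem_Bset_iff'.mp hiBj] at h1
        refine Submodule.span_mono ?_ h1
        refine Finset.coe_subset.mpr (Finset.image_subset_image ?_)
        exact subset_trans (Finset.subset_biUnion_of_mem (Dset n m r) hj)
          Finset.subset_union_left
      · exact Submodule.subset_span (Finset.mem_coe.mpr (Finset.mem_image_of_mem c
          (Finset.mem_union_right _ hiE)))
    rw [hΦap x i, dotL_comm]
    exact hxW _ hciW
  have hgpE : ∀ i ∈ E, gpd m r δ i.val = s := fun i hi => gpd_of_mem_Dset (hEsub hi)
  have hdisjRE : Disjoint ((Finset.range s).biUnion (Bset n m r δ)) E := by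
    rw [Finset.disjoint_left]
    intro a haB haE
    obtain ⟨j, hj, haBj⟩ := Finset.mem_biUnion.mp haB
    have h1 := mem_Bset_iff'.mp haBj
    have h2 := hgpE a haE
    have := Finset.mem_range.mp hj
    omega
  have hRcard : R.card = s * (r + δ - 1) + (e - 1) := by
    rw [hRdef, Finset.card_union_of_disjoint hdisjRE, hEcard]
    congr 1
    rw [Finset.card_biUnion (fun j hj j' hj' hjj =>
      Bset_disjoint (by omega) hδ hn hjj)]
    rw [Finset.sum_congr rfl (fun j hj => hBcard j (lt_trans (Finset.mem_range.mp hj) hsm)),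
      Finset.sum_const, Finset.card_range, smul_eq_mul]
  have hcwne : Φ x ≠ 0 := fun h => hx0 (hker x h)
  have hwtub : (Finset.univ.filter fun i => Φ x i ≠ 0).card ≤ dstar := by
    have hsubc : (Finset.univ.filter fun i => Φ x i ≠ 0) ⊆ Finset.univ \ R := by
      intro i hi
      rw [Finset.mem_sdiff]
      exact ⟨Finset.mem_univ _, fun hiR => (Finset.mem_filter.mp hi).2 (hcwR i hiR)⟩
    refine le_trans (Finset.card_le_card hsubc) ?_
    rw [Finset.card_sdiff_of_subset (Finset.subset_univ R), Finset.card_univ, Fintype.card_fin, hRcard]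
    omega
  have hwt_eq : (Finset.univ.filter fun i => Φ x i ≠ 0).card = dstar :=
    le_antisymm hwtub (hlow x hcwne)
  -- ===================== assembly =====================
  refine ⟨C, hfinrank, hloc, dstar, ⟨⟨Φ x, LinearMap.mem_range_self _ _, hcwne, hwt_eq⟩, ?_⟩, ?_⟩
  · rintro w ⟨cv, hcv, hnecv, rfl⟩
    obtain ⟨x', rfl⟩ := LinearMap.mem_range.mp hcv
    exact hlow x' hnecv
  · have hdiv : (k + r - 1) / r = s + 1 := by
      have h1 : k + r - 1 = (k - 1) + r := by omega
      rw [h1, Nat.add_div_right _ (by omega)]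
    rw [hdiv]
    have h5 : ((dstar + K : ℕ) : ℤ) = (n : ℤ) + 1 := by rw [hds]; push_cast; ring
    have h6 : ((K : ℕ) : ℤ) = (k : ℤ) + (s : ℤ) * ((δ : ℤ) - 1) := by
      rw [hKdef]
      push_cast [Nat.cast_sub (by omega : 1 ≤ δ)]
      ring
    push_cast at h5 ⊢
    rw [h6] at h5
    linarith
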